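/- Let Z̃ ~ Binom(M, 1/2) and 0 < l ≤ M. Define β⁺(α) on α ∈ [P(Z̃ < k), P(Z̃ ≤ k)] for k ∈ {0,...,M-l} by β⁺(α) = P(Z̃ ≥ k+l) + (P(Z̃=k+l)/P(Z̃=k))·(P(Z̃ < k) - α), and β⁺(α) = 0 for α ≥ P(Z̃ ≤ M-l). Then β⁺ is a well-defined, continuous, non-increasing, convex function on [0,1]. -/

import Mathlib

/-- The binomial probability mass function `P(Binom(M,p) = k)`. -/
noncomputable def binomPMF (M : ℕ) (p : ℝ) (k : ℕ) : ℝ :=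
  (M.choose k : ℝ) * p ^ k * (1 - p) ^ (M - k)

namespace Stmt13Aux

noncomputable def p (M k : ℕ) : ℝ := binomPMF M (1/2) k
noncomputable def S (M k : ℕ) : ℝ := ∑ j ∈ Finset.range k, p M j
noncomputable def T (M m : ℕ) : ℝ := ∑ j ∈ Finset.Icc m M, p M j
noncomputable def r (M l k : ℕ) : ℝ := p M (k + l) / p M k
noncomputable def L (M l k : ℕ) (α : ℝ) : ℝ := T M (k + l) + r M l k * (S M k - α)

lemma p_eq (M k : ℕ) (h : k ≤ M) : p M k = (M.choose k : ℝ) * (1/2) ^ M := by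
  unfold p binomPMF
  have : (1 - 1/2 : ℝ) = 1/2 := by norm_num
  rw [this, mul_assoc, ← pow_add]
  congr 2
  omega

lemma p_pos {M k : ℕ} (h : k ≤ M) : 0 < p M k := by
  rw [p_eq M k h]
  have := Nat.choose_pos h
  positivity

lemma p_nonneg (M k : ℕ) : 0 ≤ p M k := by
  unfold p binomPMF
  positivity

lemma T_succ (M m : ℕ) (h : m ≤ M) : T M m = p M m + T M (m + 1) := by
  unfold T
  rw [Finset.Icc_eq_cons_Ioc h, Finset.sum_cons, ← Finset.Icc_add_one_left_eq_Ioc]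

lemma choose_mul_le (M j l : ℕ) (h : j + 1 + l ≤ M) :
    M.choose (j + 1 + l) * M.choose j ≤ M.choose (j + l) * M.choose (j + 1) := by
  have h1 := Nat.choose_succ_right_eq M (j + l)
  have h2 := Nat.choose_succ_right_eq M j
  have key : (M - (j + l)) * (j + 1) ≤ (M - j) * (j + l + 1) :=
    Nat.mul_le_mul (Nat.sub_le_sub_left (by omega) M) (by omega)
  have hpos : 0 < (j + l + 1) * (j + 1) := by positivity
  apply Nat.le_of_mul_le_mul_right _ hpos
  calc M.choose (j + 1 + l) * M.choose j * ((j + l + 1) * (j + 1))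
      = (M.choose (j + l + 1) * (j + l + 1)) * (M.choose j * (j + 1)) := by ring_nf
    _ = (M.choose (j + l) * (M - (j + l))) * (M.choose j * (j + 1)) := by rw [h1]
    _ = M.choose (j + l) * M.choose j * ((M - (j + l)) * (j + 1)) := by ring
    _ ≤ M.choose (j + l) * M.choose j * ((M - j) * (j + l + 1)) :=
        Nat.mul_le_mul_left _ key
    _ = M.choose (j + l) * (M.choose j * (M - j)) * (j + l + 1) := by ring
    _ = M.choose (j + l) * (M.choose (j + 1) * (j + 1)) * (j + l + 1) := by rw [h2]
    _ = M.choose (j + l) * M.choose (j + 1) * ((j + l + 1) * (j + 1)) := by ring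

lemma r_anti (M l j : ℕ) (h : j + 1 + l ≤ M) : r M l (j + 1) ≤ r M l j := by
  have hj1 : j + 1 ≤ M := by omega
  have hj : j ≤ M := by omega
  have hjl : j + l ≤ M := by omega
  unfold r
  rw [p_eq M (j + 1 + l) h, p_eq M (j + 1) hj1, p_eq M (j + l) hjl, p_eq M j hj]
  have hhalf : (0:ℝ) < (1/2 : ℝ) ^ M := by positivity
  have c1 : (0:ℝ) < (M.choose (j+1) : ℝ) := by exact_mod_cast Nat.choose_pos hj1
  have c2 : (0:ℝ) < (M.choose j : ℝ) := by exact_mod_cast Nat.choose_pos hj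
  rw [div_le_div_iff₀ (by positivity) (by positivity)]
  have := choose_mul_le M j l h
  have : (M.choose (j+1+l) : ℝ) * M.choose j ≤ (M.choose (j+l) : ℝ) * M.choose (j+1) := by
    exact_mod_cast this
  have h3 := mul_le_mul_of_nonneg_right this (le_of_lt (mul_pos hhalf hhalf))
  nlinarith [h3]

lemma S_mono (M : ℕ) : Monotone (S M) := by
  intro a b hab
  exact Finset.sum_le_sum_of_subset_of_nonneg (Finset.range_subset_range.2 hab)
    (fun j _ _ => p_nonneg M j)

lemma T_nonneg (M m : ℕ) : 0 ≤ T M m :=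
  Finset.sum_nonneg fun j _ => p_nonneg M j

lemma r_nonneg (M l k : ℕ) : 0 ≤ r M l k :=
  div_nonneg (p_nonneg M _) (p_nonneg M _)

lemma S_succ (M k : ℕ) : S M (k + 1) = S M k + p M k := by
  unfold S; rw [Finset.sum_range_succ]

lemma T_top (M : ℕ) : T M (M + 1) = 0 := by
  unfold T; rw [Finset.Icc_eq_empty (by omega), Finset.sum_empty]

lemma L_alt (M l k : ℕ) (h : k + l ≤ M) (α : ℝ) :
    L M l k α = T M (k + l + 1) + r M l k * (S M (k + 1) - α) := by
  have hk : k ≤ M := by omega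
  have hp : p M k ≠ 0 := ne_of_gt (p_pos hk)
  unfold L
  rw [T_succ M (k + l) h, S_succ M k]
  have : r M l k * p M k = p M (k + l) := by
    unfold r; field_simp
  nlinarith [this]

lemma L_anti (M l k : ℕ) {a b : ℝ} (hab : a ≤ b) : L M l k b ≤ L M l k a := by
  unfold L
  nlinarith [r_nonneg M l k]

lemma L_succ_le (M l j : ℕ) (h : j + 1 + l ≤ M) {α : ℝ} (hα : S M (j + 1) ≤ α) :
    L M l j α ≤ L M l (j + 1) α := by
  rw [L_alt M l j (by omega) α]
  unfold L
  have he : j + 1 + l = j + l + 1 := by omega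
  rw [he]
  nlinarith [mul_nonneg (sub_nonneg.2 (r_anti M l j h)) (sub_nonneg.2 hα)]

lemma L_le_succ (M l j : ℕ) (h : j + 1 + l ≤ M) {α : ℝ} (hα : α ≤ S M (j + 1)) :
    L M l (j + 1) α ≤ L M l j α := by
  rw [L_alt M l j (by omega) α]
  unfold L
  have he : j + 1 + l = j + l + 1 := by omega
  rw [he]
  nlinarith [mul_nonneg (sub_nonneg.2 (r_anti M l j h)) (sub_nonneg.2 hα)]

lemma L_up (M l : ℕ) {j k : ℕ} (hjk : j ≤ k) (hk : k + l ≤ M) {α : ℝ}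
    (hα : S M k ≤ α) : L M l j α ≤ L M l k α := by
  induction k, hjk using Nat.le_induction with
  | base => exact le_refl _
  | succ n hn ih =>
    have h1 : S M n ≤ α := le_trans (S_mono M (by omega)) hα
    exact le_trans (ih (by omega) h1) (L_succ_le M l n (by omega) hα)

lemma L_down (M l : ℕ) {j k : ℕ} (hjk : k ≤ j) (hj : j + l ≤ M) {α : ℝ}
    (hα : α ≤ S M (k + 1)) : L M l j α ≤ L M l k α := by
  induction j, hjk using Nat.le_induction with
  | base => exact le_refl _
  | succ n hn ih =>
    have h2 : α ≤ S M (n + 1) := le_trans hα (S_mono M (by omega))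
    exact le_trans (L_le_succ M l n (by omega) h2) (ih (by omega))

lemma cont_sup' {ι : Type*} (s : Finset ι) (hs : s.Nonempty) (f : ι → ℝ → ℝ)
    (hf : ∀ i ∈ s, Continuous (f i)) :
    Continuous fun x => s.sup' hs fun i => f i x := by
  revert hf
  induction hs using Finset.Nonempty.cons_induction with
  | singleton a => intro hf; simpa using hf a (Finset.mem_singleton_self a)
  | cons a t ha ht ih =>
    intro hf
    simp only [Finset.sup'_cons ht]
    exact (hf a (Finset.mem_cons_self a t)).max
      (ih fun i hi => hf i (Finset.mem_cons_of_mem hi))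

lemma convexOn_sup' {ι : Type*} (s : Finset ι) (hs : s.Nonempty) (f : ι → ℝ → ℝ)
    (hf : ∀ i ∈ s, ConvexOn ℝ (Set.Icc (0:ℝ) 1) (f i)) :
    ConvexOn ℝ (Set.Icc (0:ℝ) 1) fun x => s.sup' hs fun i => f i x := by
  revert hf
  induction hs using Finset.Nonempty.cons_induction with
  | singleton a => intro hf; simpa using hf a (Finset.mem_singleton_self a)
  | cons a t ha ht ih =>
    intro hf
    have h1 := hf a (Finset.mem_cons_self a t)
    have h2 := ih fun i hi => hf i (Finset.mem_cons_of_mem hi)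
    have := h1.sup h2
    have hfun : ((f a) ⊔ fun x => t.sup' ht fun i => f i x)
        = fun x => (Finset.cons a t ha).sup' (Finset.cons_nonempty ha) fun i => f i x := by
      funext x
      rw [Pi.sup_apply, Finset.sup'_cons ht]
    rwa [hfun] at this

lemma convexOn_affine (a b : ℝ) : ConvexOn ℝ (Set.Icc (0:ℝ) 1) fun x => a * x + b := by
  refine ⟨convex_Icc 0 1, ?_⟩
  intro x _ y _ t1 t2 _ _ hts
  simp only [smul_eq_mul]
  apply le_of_eq
  linear_combination (-b) * hts

lemma L_continuous (M l k : ℕ) : Continuous (L M l k) := by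
  unfold L
  fun_prop

lemma L_convexOn (M l k : ℕ) : ConvexOn ℝ (Set.Icc (0:ℝ) 1) (L M l k) := by
  have : L M l k = fun x => (-(r M l k)) * x + (T M (k + l) + r M l k * S M k) := by
    funext x; unfold L; ring
  rw [this]
  exact convexOn_affine _ _

end Stmt13Aux

open Stmt13Aux
theorem stmt13 (M l : ℕ) (hl : 0 < l) (hlM : l ≤ M) :
    ∃ β : ℝ → ℝ,
      (∀ k : ℕ, k ≤ M - l →
        ∀ α ∈ Set.Icc (∑ j ∈ Finset.range k, binomPMF M (1/2) j)
            (∑ j ∈ Finset.range (k + 1), binomPMF M (1/2) j),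
          β α = (∑ j ∈ Finset.Icc (k + l) M, binomPMF M (1/2) j)
            + binomPMF M (1/2) (k + l) / binomPMF M (1/2) k
              * ((∑ j ∈ Finset.range k, binomPMF M (1/2) j) - α)) ∧
      (∀ α ∈ Set.Icc (∑ j ∈ Finset.range (M - l + 1), binomPMF M (1/2) j) 1, β α = 0) ∧
      ContinuousOn β (Set.Icc 0 1) ∧ AntitoneOn β (Set.Icc 0 1) ∧
      ConvexOn ℝ (Set.Icc 0 1) β := by
  have hne : (Finset.range (M - l + 1)).Nonempty := ⟨0, by simp⟩
  set g : ℝ → ℝ := fun α => (Finset.range (M - l + 1)).sup' hne fun k => L M l k α with hg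
  refine ⟨fun α => max 0 (g α), ?_, ?_, ?_, ?_, ?_⟩
  · -- piecewise formula
    intro k hk α hα
    have hkl : k + l ≤ M := by omega
    have h1 : S M k ≤ α := hα.1
    have h2 : α ≤ S M (k + 1) := hα.2
    show max 0 (g α) = L M l k α
    have hub : ∀ j ∈ Finset.range (M - l + 1), L M l j α ≤ L M l k α := by
      intro j hj
      have hj' : j ≤ M - l := by
        have := Finset.mem_range.1 hj; omega
      rcases le_or_gt j k with hle | hgt
      · exact L_up M l hle hkl h1
      · exact L_down M l (le_of_lt hgt) (by omega) h2
    have h0 : 0 ≤ L M l k α := by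
      have hv : L M l k (S M (k + 1)) = T M (k + l + 1) := by
        rw [L_alt M l k hkl]; ring
      have := L_anti M l k h2
      have := T_nonneg M (k + l + 1)
      linarith [L_anti M l k h2]
    apply le_antisymm
    · exact max_le h0 (Finset.sup'_le hne _ hub)
    · exact le_trans (Finset.le_sup' (fun j => L M l j α)
        (Finset.mem_range.2 (by omega))) (le_max_right _ _)
  · -- zero region
    intro α hα
    have h1 : S M (M - l + 1) ≤ α := hα.1
    show max 0 (g α) = 0
    have hMl : M - l + l = M := by omega
    apply max_eq_left
    apply Finset.sup'_le hne
    intro j hj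
    have hj' : j ≤ M - l := by
      have := Finset.mem_range.1 hj; omega
    have hup : L M l j α ≤ L M l (M - l) α :=
      L_up M l hj' (by omega) (le_trans (S_mono M (by omega)) h1)
    have hz : L M l (M - l) α ≤ 0 := by
      rw [L_alt M l (M - l) (by omega) α]
      have he : M - l + l + 1 = M + 1 := by omega
      rw [he, T_top M]
      have := mul_nonpos_of_nonneg_of_nonpos (r_nonneg M l (M - l))
        (by linarith : S M (M - l + 1) - α ≤ 0)
      linarith
    linarith
  · -- continuity
    apply Continuous.continuousOn
    exact continuous_const.max (cont_sup' _ hne _ fun i _ => L_continuous M l i)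
  · -- antitone
    intro a _ b _ hab
    apply max_le (le_max_left _ _)
    apply le_trans _ (le_max_right _ _)
    apply Finset.sup'_le hne
    intro j hj
    exact le_trans (L_anti M l j hab) (Finset.le_sup' (fun i => L M l i a) hj)
  · -- convexity
    have hconv := convexOn_sup' _ hne _ fun i _ => L_convexOn M l i
    have := (convexOn_const (0:ℝ) (convex_Icc (0:ℝ) 1)).sup hconv
    have hfun : ((fun _ => (0:ℝ)) ⊔ g) = fun α => max 0 (g α) := by
      funext x
      rw [Pi.sup_apply]
    rwa [hfun] at this
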